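/- arXiv:2007.02792 — 7 statements merged into one kernel-verified Lean document; each statement's English description precedes it below -/
import Mathlib

section
/- Let X be a Banach space, G a group, and θ : G → ℤ a surjective group homomorphism. Suppose M : ℓ∞(G, X) → X is an X-valued invariant mean (a bounded linear operator with M(x·1_G) = x for all x ∈ X and M(f) = M(s·f) = M(f·s) for all s ∈ G, f ∈ ℓ∞(G,X)). Then M(f) = 0 for every bounded function f : G → X supported on the kernel of θ. -/
open scoped ENNReal

noncomputable section

abbrev Linf (S : Type*) (X : Type*) [NormedAddCommGroup X] : Type _ :=
  lp (fun _ : S => X) ⊤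

def linfConst (S : Type*) {X : Type*} [NormedAddCommGroup X] (x : X) : Linf S X :=
  ⟨fun _ => x, memℓp_infty ⟨‖x‖, by rintro - ⟨t, rfl⟩; exact le_rfl⟩⟩

def lTrans {S X : Type*} [Add S] [NormedAddCommGroup X] (s : S) (f : Linf S X) : Linf S X :=
  ⟨fun t => f (s + t), memℓp_infty ⟨‖f‖, by
    rintro - ⟨t, rfl⟩; exact lp.norm_apply_le_norm (by simp) f (s + t)⟩⟩

def rTrans {S X : Type*} [Add S] [NormedAddCommGroup X] (s : S) (f : Linf S X) : Linf S X :=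
  ⟨fun t => f (t + s), memℓp_infty ⟨‖f‖, by
    rintro - ⟨t, rfl⟩; exact lp.norm_apply_le_norm (by simp) f (t + s)⟩⟩

def IsInvMean {S X : Type*} [Add S] [NormedAddCommGroup X] [NormedSpace ℝ X]
    (lam : ℝ) (M : Linf S X →L[ℝ] X) : Prop :=
  ‖M‖ ≤ lam ∧ (∀ x : X, M (linfConst S x) = x) ∧
    ∀ (s : S) (f : Linf S X), M (lTrans s f) = M f ∧ M (rTrans s f) = M f

theorem invariant_mean_vanishes_on_kernel_supported
    {G X : Type*} [AddGroup G] [NormedAddCommGroup X] [NormedSpace ℝ X] [CompleteSpace X]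
    (θ : G →+ ℤ) (hθ : Function.Surjective θ)
    (lam : ℝ) (M : Linf G X →L[ℝ] X) (hM : IsInvMean lam M)
    (f : Linf G X) (hf : ∀ t : G, θ t ≠ 0 → f t = 0) :
    M f = 0 := by
  obtain ⟨g, hg⟩ := hθ 1
  set F : ℕ → Linf G X := fun n => lTrans (n • g) f with hF
  have hθn : ∀ (n : ℕ) (t : G), θ (n • g + t) = n + θ t := by
    intro n t
    simp [hg]
  have hFapp : ∀ (n : ℕ) (t : G), (F n : ∀ _ : G, X) t = f (n • g + t) := fun n t => rfl
  have hMF : ∀ n, M (F n) = M f := fun n => (hM.2.2 (n • g) f).1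
  -- pointwise bound on partial sums
  have key : ∀ N : ℕ, (N : ℝ) * ‖M f‖ ≤ ‖M‖ * ‖f‖ := by
    intro N
    set S : Linf G X := ∑ n ∈ Finset.range N, F n with hS
    have hScoe : ∀ t : G, (S : ∀ _ : G, X) t = ∑ n ∈ Finset.range N, f (n • g + t) := by
      intro t
      rw [hS]
      induction (Finset.range N) using Finset.cons_induction with
      | empty => simp
      | cons a s ha ih =>
        rw [Finset.sum_cons, Finset.sum_cons, ← ih]
        exact lp.coeFn_add (F a) (∑ n ∈ s, F n) ▸ rfl
    have hSnorm : ‖S‖ ≤ ‖f‖ := by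
      apply lp.norm_le_of_forall_le (norm_nonneg f)
      intro t
      rw [hScoe t]
      by_cases h : ∃ n ∈ Finset.range N, (n : ℤ) = -θ t
      · obtain ⟨n₀, hn₀, hn₀'⟩ := h
        rw [Finset.sum_eq_single_of_mem n₀ hn₀]
        · exact lp.norm_apply_le_norm (by simp) f (n₀ • g + t)
        · intro m hm hmn
          apply hf
          rw [hθn]
          intro hc
          apply hmn
          have : (m : ℤ) = -θ t := by linarith
          exact_mod_cast this.trans hn₀'.symm
      · rw [Finset.sum_eq_zero]
        · simp [norm_nonneg]
        · intro m hm
          apply hf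
          rw [hθn]
          intro hc
          exact h ⟨m, hm, by linarith⟩
    have hMS : M S = N • M f := by
      rw [hS, map_sum, Finset.sum_congr rfl fun n _ => hMF n]
      simp
    have h1 : ‖M S‖ ≤ ‖M‖ * ‖f‖ :=
      le_trans (M.le_opNorm S) (mul_le_mul_of_nonneg_left hSnorm (norm_nonneg M))
    rw [hMS] at h1
    calc (N : ℝ) * ‖M f‖ = ‖N • M f‖ := by rw [← Nat.cast_smul_eq_nsmul ℝ, norm_smul, Real.norm_natCast]
    _ ≤ ‖M‖ * ‖f‖ := h1
  by_contra h
  have hpos : 0 < ‖M f‖ := norm_pos_iff.mpr h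
  obtain ⟨N, hN⟩ := exists_nat_gt (‖M‖ * ‖f‖ / ‖M f‖)
  have h2 := (div_lt_iff₀ hpos).mp hN
  linarith [key N]

end
end

section
/- Let X be a Banach space and λ ≥ 1. If for some cardinal α there exists an X-valued invariant λ-mean on the free Abelian group ℤ^(α) (the direct sum of α copies of ℤ), then there exists an X-valued invariant λ-mean on the free commutative monoid ℕ^(α). -/
open scoped ENNReal

noncomputable section

namespace MeanAux

variable {ι X : Type*} [NormedAddCommGroup X] [NormedSpace ℝ X]

/-- Coordinatewise absolute value, from `ι →₀ ℤ` to `ι →₀ ℕ`. -/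
def absF (g : ι →₀ ℤ) : ι →₀ ℕ := Finsupp.mapRange Int.natAbs Int.natAbs_zero g

lemma absF_apply (g : ι →₀ ℤ) (j : ι) : absF g j = (g j).natAbs :=
  Finsupp.mapRange_apply

/-- Pullback of a bounded function along a map of index sets. -/
def pull (φ : (ι →₀ ℤ) → (ι →₀ ℕ)) (f : Linf (ι →₀ ℕ) X) : Linf (ι →₀ ℤ) X :=
  ⟨fun g => f (φ g), memℓp_infty ⟨‖f‖, by
    rintro - ⟨g, rfl⟩; exact lp.norm_apply_le_norm (by simp) f (φ g)⟩⟩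

/-- Conditional pullback: `f ∘ φ` on the set where `c` holds, `0` elsewhere. -/
def cpull (c : (ι →₀ ℤ) → Prop) [DecidablePred c] (φ : (ι →₀ ℤ) → (ι →₀ ℕ))
    (f : Linf (ι →₀ ℕ) X) : Linf (ι →₀ ℤ) X :=
  ⟨fun g => if c g then f (φ g) else 0, memℓp_infty ⟨‖f‖, by
    rintro - ⟨g, rfl⟩
    dsimp only
    split
    · exact lp.norm_apply_le_norm (by simp) f _
    · simpa using norm_nonneg f⟩⟩

lemma absF_single_add {g : ι →₀ ℤ} {i : ι} (h : 0 ≤ g i) :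
    absF (Finsupp.single i 1 + g) = Finsupp.single i 1 + absF g := by
  ext j
  rcases eq_or_ne i j with rfl | hj
  · simp only [Finsupp.add_apply, absF_apply, Finsupp.single_eq_same]
    omega
  · simp only [Finsupp.add_apply, absF_apply, Finsupp.single_eq_of_ne' hj]
    omega

lemma absF_neg_single_add {g : ι →₀ ℤ} {i : ι} (h : g i ≤ 0) :
    absF (-Finsupp.single i 1 + g) = Finsupp.single i 1 + absF g := by
  ext j
  rcases eq_or_ne i j with rfl | hj
  · simp only [Finsupp.add_apply, absF_apply, Finsupp.neg_apply, Finsupp.single_eq_same]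
    omega
  · simp only [Finsupp.add_apply, absF_apply, Finsupp.neg_apply, Finsupp.single_eq_of_ne' hj]
    omega

section M

variable (M : Linf (ι →₀ ℤ) X →L[ℝ] X) (lam : ℝ)

/-- If a bounded function is supported on the hyperplane `{g | g i = 0}`, its mean is zero. -/
lemma null_hyperplane (hM : ‖M‖ ≤ lam)
    (hinv : ∀ (s : ι →₀ ℤ) (F : Linf (ι →₀ ℤ) X), M (lTrans s F) = M F)
    (i : ι) (F : Linf (ι →₀ ℤ) X) (hF : ∀ g : ι →₀ ℤ, g i ≠ 0 → F g = 0) :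
    M F = 0 := by
  -- partial sums of disjointly supported translates
  have key : ∀ n : ℕ, ∀ g : ι →₀ ℤ,
      ‖∑ k ∈ Finset.range n, F (Finsupp.single i (k : ℤ) + g)‖ ≤ ‖F‖ := by
    intro n g
    by_cases hex : ∃ k ∈ Finset.range n, ((k : ℤ) + g i = 0)
    · obtain ⟨k₀, hk₀, hk0⟩ := hex
      rw [Finset.sum_eq_single_of_mem k₀ hk₀ ?_]
      · exact lp.norm_apply_le_norm (by simp) F _
      · intro b _ hb
        apply hF
        have : ((Finsupp.single i (b : ℤ) + g) i) = (b : ℤ) + g i := by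
          simp [Finsupp.add_apply, Finsupp.single_eq_same]
        rw [this]
        omega
    · rw [Finset.sum_eq_zero]
      · simpa using norm_nonneg F
      · intro k hk
        apply hF
        have : ((Finsupp.single i (k : ℤ) + g) i) = (k : ℤ) + g i := by
          simp [Finsupp.add_apply, Finsupp.single_eq_same]
        rw [this]
        intro hc
        exact hex ⟨k, hk, hc⟩
  let U : ℕ → Linf (ι →₀ ℤ) X := fun n =>
    ⟨fun g => ∑ k ∈ Finset.range n, F (Finsupp.single i (k : ℤ) + g),
      memℓp_infty ⟨‖F‖, by rintro - ⟨g, rfl⟩; exact key n g⟩⟩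
  have hUnorm : ∀ n, ‖U n‖ ≤ ‖F‖ := fun n =>
    lp.norm_le_of_forall_le (norm_nonneg F) (key n)
  have hUsucc : ∀ n, U (n + 1) = U n + lTrans (Finsupp.single i (n : ℤ)) F := by
    intro n
    apply lp.ext
    funext g
    show (∑ k ∈ Finset.range (n + 1), F (Finsupp.single i (k : ℤ) + g)) = _
    rw [Finset.sum_range_succ, lp.coeFn_add, Pi.add_apply]
    rfl
  have hMU : ∀ n, M (U n) = (n : ℝ) • M F := by
    intro n
    induction n with
    | zero =>
      have : U 0 = 0 := by
        apply lp.ext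
        funext g
        simp [U]
      rw [this]
      simp
    | succ n ih =>
      rw [hUsucc n, map_add, ih, hinv]
      push_cast
      rw [add_smul, one_smul]
  have hbound : ∀ n : ℕ, (n : ℝ) * ‖M F‖ ≤ lam * ‖F‖ := by
    intro n
    calc (n : ℝ) * ‖M F‖ = ‖(n : ℝ) • M F‖ := by
          rw [norm_smul, Real.norm_natCast]
      _ = ‖M (U n)‖ := by rw [hMU n]
      _ ≤ ‖M‖ * ‖U n‖ := M.le_opNorm (U n)
      _ ≤ lam * ‖F‖ := by
          apply mul_le_mul hM (hUnorm n) (norm_nonneg _)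
          exact le_trans (norm_nonneg M) hM
  have : ‖M F‖ = 0 := by
    by_contra hne
    have hpos : 0 < ‖M F‖ := lt_of_le_of_ne (norm_nonneg _) (Ne.symm hne)
    obtain ⟨n, hn⟩ := exists_nat_gt (lam * ‖F‖ / ‖M F‖)
    have := hbound n
    rw [div_lt_iff₀ hpos] at hn
    linarith
  exact norm_eq_zero.mp this

/-- Core invariance: translating by one generator does not change the pulled-back mean. -/
lemma core (hM : ‖M‖ ≤ lam)
    (hinv : ∀ (s : ι →₀ ℤ) (F : Linf (ι →₀ ℤ) X), M (lTrans s F) = M F)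
    (i : ι) (f : Linf (ι →₀ ℕ) X) :
    M (pull (fun g => Finsupp.single i 1 + absF g) f) = M (pull absF f) := by
  set ε : ι →₀ ℤ := Finsupp.single i 1 with hε
  set e : ι →₀ ℕ := Finsupp.single i 1 with he
  set Am : Linf (ι →₀ ℤ) X := cpull (fun g => g i < 0) (fun g => absF (g + ε)) f with hAm
  set A0 : Linf (ι →₀ ℤ) X := cpull (fun g => g i < 0) absF f with hA0
  set A1 : Linf (ι →₀ ℤ) X := cpull (fun g => g i < 0) (fun g => e + absF g) f with hA1
  set N0 : Linf (ι →₀ ℤ) X := cpull (fun g => g i = 0) absF f with hN0d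
  set N1 : Linf (ι →₀ ℤ) X := cpull (fun g => g i = 0) (fun g => e + absF g) f with hN1d
  have hepsi : ∀ g : ι →₀ ℤ, (-ε + g) i = -1 + g i := by
    intro g
    simp [hε, Finsupp.add_apply, Finsupp.neg_apply, Finsupp.single_eq_same]
  have hN0 : M N0 = 0 :=
    null_hyperplane M lam hM hinv i N0 (fun g hg => if_neg hg)
  have hN1 : M N1 = 0 :=
    null_hyperplane M lam hM hinv i N1 (fun g hg => if_neg hg)
  have E1 : lTrans (-ε) Am = A0 + N0 := by
    apply lp.ext
    funext g
    rw [lp.coeFn_add, Pi.add_apply]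
    show (if (-ε + g) i < 0 then f (absF (-ε + g + ε)) else 0)
        = (if g i < 0 then f (absF g) else 0) + (if g i = 0 then f (absF g) else 0)
    have h2 : -ε + g + ε = g := by abel
    rw [hepsi g, h2]
    rcases lt_trichotomy (g i) 0 with h | h | h
    · rw [if_pos (by omega), if_pos h, if_neg (by omega), add_zero]
    · rw [if_pos (by omega), if_neg (by omega), if_pos h, zero_add]
    · rw [if_neg (by omega), if_neg (by omega), if_neg (by omega), add_zero]
  have E2 : lTrans (-ε) A0 = A1 + N1 := by
    apply lp.ext
    funext g
    rw [lp.coeFn_add, Pi.add_apply]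
    show (if (-ε + g) i < 0 then f (absF (-ε + g)) else 0)
        = (if g i < 0 then f (e + absF g) else 0) + (if g i = 0 then f (e + absF g) else 0)
    rw [hepsi g]
    rcases lt_trichotomy (g i) 0 with h | h | h
    · rw [if_pos (by omega), absF_neg_single_add (le_of_lt h), if_pos h,
        if_neg (by omega), add_zero]
    · rw [if_pos (by omega), absF_neg_single_add (le_of_eq h), if_neg (by omega),
        if_pos h, zero_add]
    · rw [if_neg (by omega), if_neg (by omega), if_neg (by omega), add_zero]
  have E3 : pull (fun g => e + absF g) f = lTrans ε (pull absF f) + A1 - Am := by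
    apply lp.ext
    funext g
    rw [lp.coeFn_sub, Pi.sub_apply, lp.coeFn_add, Pi.add_apply]
    show f (e + absF g) = f (absF (ε + g)) + (if g i < 0 then f (e + absF g) else 0)
        - (if g i < 0 then f (absF (g + ε)) else 0)
    by_cases h : g i < 0
    · rw [if_pos h, if_pos h, add_comm g ε]
      abel
    · rw [if_neg h, if_neg h, absF_single_add (by omega)]
      abel
  have step1 : M A0 = M Am := by
    have t := hinv (-ε) Am
    rw [E1, map_add, hN0, add_zero] at t
    exact t
  have step2 : M A1 = M A0 := by
    have t := hinv (-ε) A0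
    rw [E2, map_add, hN1, add_zero] at t
    exact t
  have hAmA1 : M Am = M A1 := step1.symm.trans step2.symm
  rw [E3, map_sub, map_add, hinv ε (pull absF f), ← hAmA1, add_sub_cancel_right]

/-- Full invariance: translating by any element of `ι →₀ ℕ`. -/
lemma main (hM : ‖M‖ ≤ lam)
    (hinv : ∀ (s : ι →₀ ℤ) (F : Linf (ι →₀ ℤ) X), M (lTrans s F) = M F) :
    ∀ s : ι →₀ ℕ, ∀ f : Linf (ι →₀ ℕ) X,
      M (pull (fun g => s + absF g) f) = M (pull absF f) := by
  set P : (ι →₀ ℕ) → Prop := fun s => ∀ f : Linf (ι →₀ ℕ) X,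
    M (pull (fun g => s + absF g) f) = M (pull absF f) with hP
  have hzero : P 0 := by
    intro f
    have : pull (fun g => (0 : ι →₀ ℕ) + absF g) f = pull absF f := by
      apply lp.ext
      funext g
      show f (0 + absF g) = f (absF g)
      rw [zero_add]
    rw [this]
  have hadd : ∀ s t : ι →₀ ℕ, P s → P t → P (s + t) := by
    intro s t hs ht f
    have e1 : pull (fun g => (s + t) + absF g) f = pull (fun g => s + absF g) (lTrans t f) := by
      apply lp.ext
      funext g
      show f ((s + t) + absF g) = f (t + (s + absF g))
      rw [add_comm s t, add_assoc]
    have e2 : pull absF (lTrans t f) = pull (fun g => t + absF g) f := by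
      apply lp.ext
      rfl
    rw [e1, hs (lTrans t f), e2, ht f]
  have hsingle : ∀ (a : ι) (b : ℕ), P (Finsupp.single a b) := by
    intro a b
    induction b with
    | zero => simpa using hzero
    | succ b ih =>
      have : Finsupp.single a (b + 1) = Finsupp.single a b + Finsupp.single a 1 :=
        Finsupp.single_add a b 1
      rw [this]
      exact hadd _ _ ih (core M lam hM hinv a)
  intro s
  induction s using Finsupp.induction with
  | zero => exact hzero
  | single_add a b s' _ _ ih => exact hadd _ _ (hsingle a b) ih

end M

end MeanAux

open MeanAux in
theorem mean_on_free_abelian_gives_mean_on_free_monoid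
    {ι X : Type*} [NormedAddCommGroup X] [NormedSpace ℝ X] [CompleteSpace X]
    (lam : ℝ) (hlam : 1 ≤ lam)
    (h : ∃ M : Linf (ι →₀ ℤ) X →L[ℝ] X, IsInvMean lam M) :
    ∃ M' : Linf (ι →₀ ℕ) X →L[ℝ] X, IsInvMean lam M' := by
  obtain ⟨M, hM, hconst, hinvBoth⟩ := h
  have hinv : ∀ (s : ι →₀ ℤ) (F : Linf (ι →₀ ℤ) X), M (lTrans s F) = M F :=
    fun s F => (hinvBoth s F).1
  have h0lam : 0 ≤ lam := le_trans zero_le_one hlam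
  -- the pullback operator along coordinatewise absolute value
  let pullL : Linf (ι →₀ ℕ) X →ₗ[ℝ] Linf (ι →₀ ℤ) X :=
    { toFun := fun f => pull absF f
      map_add' := fun f g => by
        apply lp.ext
        funext x
        show (f + g) (absF x) = (pull absF f + pull absF g) x
        rw [lp.coeFn_add, Pi.add_apply, lp.coeFn_add, Pi.add_apply]
        rfl
      map_smul' := fun c f => by
        apply lp.ext
        funext x
        show (c • f) (absF x) = (c • pull absF f) x
        rw [lp.coeFn_smul, Pi.smul_apply, lp.coeFn_smul, Pi.smul_apply]
        rfl }
  let pullCLM : Linf (ι →₀ ℕ) X →L[ℝ] Linf (ι →₀ ℤ) X :=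
    LinearMap.mkContinuous pullL 1 (fun f => by
      rw [one_mul]
      exact lp.norm_le_of_forall_le (norm_nonneg f)
        (fun g => lp.norm_apply_le_norm (by simp) f _))
  refine ⟨M.comp pullCLM, ?_, ?_, ?_⟩
  · calc ‖M.comp pullCLM‖ ≤ ‖M‖ * ‖pullCLM‖ := M.opNorm_comp_le pullCLM
      _ ≤ lam * 1 := by
          apply mul_le_mul hM (LinearMap.mkContinuous_norm_le pullL zero_le_one _)
            (norm_nonneg _) h0lam
      _ = lam := mul_one lam
  · intro x
    have : pullCLM (linfConst _ x) = linfConst _ x := by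
      apply lp.ext
      rfl
    rw [ContinuousLinearMap.comp_apply, this, hconst]
  · intro s f
    have hl : M.comp pullCLM (lTrans s f) = M.comp pullCLM f := by
      have e1 : pullCLM (lTrans s f) = pull (fun g => s + absF g) f := by
        apply lp.ext
        rfl
      rw [ContinuousLinearMap.comp_apply, e1, ContinuousLinearMap.comp_apply]
      exact main M lam hM hinv s f
    refine ⟨hl, ?_⟩
    have hr : rTrans s f = lTrans s f := by
      apply lp.ext
      funext t
      show f (t + s) = f (s + t)
      rw [add_comm]
    rw [hr]
    exact hl

end
end

section
/- Let X be a Banach space, G a group, and H a normal subgroup of G. If there exists an X-valued invariant λ-mean on G, then there exists an X-valued invariant λ-mean on the quotient group G/H. -/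
open scoped ENNReal

noncomputable section

/-- Pullback of a bounded function along a map of index sets. -/
def linfComp {S T : Type*} {X : Type*} [NormedAddCommGroup X] (φ : S → T) (f : Linf T X) :
    Linf S X :=
  ⟨fun s => f (φ s), memℓp_infty ⟨‖f‖, by
    rintro - ⟨s, rfl⟩; exact lp.norm_apply_le_norm (by simp) f (φ s)⟩⟩

def linfCompL {S T : Type*} {X : Type*} [NormedAddCommGroup X] [NormedSpace ℝ X] (φ : S → T) :
    Linf T X →L[ℝ] Linf S X := by
  refine LinearMap.mkContinuous
    { toFun := linfComp φ
      map_add' := fun f g => by ext s; rfl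
      map_smul' := fun c f => by ext s; rfl } 1 (fun f => ?_)
  rw [one_mul]
  refine lp.norm_le_of_forall_le (norm_nonneg f) fun s => ?_
  exact lp.norm_apply_le_norm (by simp) f (φ s)

theorem invariant_mean_passes_to_quotient
    {G X : Type*} [AddGroup G] [NormedAddCommGroup X] [NormedSpace ℝ X] [CompleteSpace X]
    (H : AddSubgroup G) [H.Normal] (lam : ℝ)
    (h : ∃ M : Linf G X →L[ℝ] X, IsInvMean lam M) :
    ∃ M' : Linf (G ⧸ H) X →L[ℝ] X, IsInvMean lam M' := by
  obtain ⟨M, hM, hconst, hinv⟩ := h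
  set π : G → G ⧸ H := QuotientAddGroup.mk
  refine ⟨M.comp (linfCompL π), ?_, ?_, ?_⟩
  · calc ‖M.comp (linfCompL π)‖ ≤ ‖M‖ * ‖linfCompL (X := X) π‖ := ContinuousLinearMap.opNorm_comp_le _ _
      _ ≤ lam * 1 := by
        refine mul_le_mul hM ?_ (norm_nonneg _) ((norm_nonneg M).trans hM)
        exact LinearMap.mkContinuous_norm_le _ zero_le_one _
      _ = lam := mul_one lam
  · intro x
    have : linfCompL (X := X) π (linfConst (G ⧸ H) x) = linfConst G x := by ext g; rfl
    simp only [ContinuousLinearMap.comp_apply, this, hconst]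
  · intro s f
    obtain ⟨g, rfl⟩ := QuotientAddGroup.mk_surjective s
    constructor
    · have : linfCompL (X := X) π (lTrans (π g) f) = lTrans g (linfCompL π f) := by
        ext t; show f (π g + π t) = f (π (g + t)); rfl
      change M.comp (linfCompL π) (lTrans (π g) f) = M.comp (linfCompL π) f
      simp only [ContinuousLinearMap.comp_apply, this, (hinv g (linfCompL π f)).1]
    · have : linfCompL (X := X) π (rTrans (π g) f) = rTrans g (linfCompL π f) := by
        ext t; show f (π t + π g) = f (π (t + g)); rfl
      change M.comp (linfCompL π) (rTrans (π g) f) = M.comp (linfCompL π) f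
      simp only [ContinuousLinearMap.comp_apply, this, (hinv g (linfCompL π f)).2]

end
end

section
/- Let V be an infinite-dimensional vector space over an arbitrary field. Then there exists a binary operation ∗ on the set Fin V of all finite-dimensional subspaces of V such that (Fin V, ∗) is a free commutative monoid and for all F, G ∈ Fin V, both F and G are contained (as subspaces) in F ∗ G. -/
open Cardinal Set
open scoped Classical
set_option linter.unusedSectionVars false
set_option linter.unusedVariables false

noncomputable section
namespace FCMAux
open scoped Classical
set_option linter.unusedSectionVars false

variable {α : Type*} [PartialOrder α] [OrderBot α] [Infinite α]

abbrev A (α : Type*) [PartialOrder α] := α →₀ ℕ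

/-- domain of a partial assignment -/
def dom (P : Set (A α × α)) : Set (A α) := Prod.fst '' P
def ran (P : Set (A α × α)) : Set α := Prod.snd '' P

def Pinj (P : Set (A α × α)) : Prop := ∀ p ∈ P, ∀ q ∈ P, p.2 = q.2 → p.1 = q.1
def Pmono (P : Set (A α × α)) : Prop := ∀ p ∈ P, ∀ q ∈ P, p.1 ≤ q.1 → p.2 ≤ q.2
def Pdc (P : Set (A α × α)) : Prop := ∀ p ∈ P, ∀ b : A α, b ≤ p.1 → b ∈ dom P

def Good (P : Set (A α × α)) : Prop := ((0 : A α), (⊥ : α)) ∈ P ∧ Pinj P ∧ Pmono P ∧ Pdc P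

theorem Good.pfun {P : Set (A α × α)} (h : Good P) :
    ∀ p ∈ P, ∀ q ∈ P, p.1 = q.1 → p.2 = q.2 := by
  intro p hp q hq he
  exact le_antisymm (h.2.2.1 p hp q hq he.le) (h.2.2.1 q hq p hp he.ge)

theorem dom_mono {P Q : Set (A α × α)} (h : P ⊆ Q) : dom P ⊆ dom Q :=
  Set.image_mono h

theorem card_lt_aux {P Q : Set (A α × α)} (hP : #P < #α) (hPQ : P ⊆ Q)
    (hfin : (Q \ P).Finite) : #Q < #α := by
  have h1 : Q ⊆ P ∪ (Q \ P) := fun x hx => by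
    by_cases hxP : x ∈ P
    · exact Or.inl hxP
    · exact Or.inr ⟨hx, hxP⟩
  calc #Q ≤ #(↥(P ∪ (Q \ P))) := mk_le_mk_of_subset h1
    _ ≤ #P + #(Q \ P : Set _) := mk_union_le _ _
    _ < #α := by
        apply Cardinal.add_lt_of_lt (aleph0_le_mk α) hP
        exact lt_of_lt_of_le hfin.lt_aleph0 (aleph0_le_mk α)

end FCMAux
end

noncomputable section
namespace FCMAux
variable {α : Type*} [PartialOrder α] [OrderBot α] [Infinite α]

section Defs

/-- choose a fresh value above everything assigned below `b` -/
def chooseVal (P : Set (A α × α)) (b : A α) : α :=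
  if h : ∃ W : α, W ∉ ran P ∧ ∀ p ∈ P, p.1 ≤ b → p.2 ≤ W then h.choose else ⊥

def addOne (b : A α) (P : Set (A α × α)) : Set (A α × α) :=
  if b ∈ dom P then P else insert (b, chooseVal P b) P

/-- hypothesis on `α`: above any finite set there are `#α` many elements -/
def Hext (α : Type*) [PartialOrder α] : Prop :=
  ∀ s : Set α, s.Finite → ∀ U : Set α, #U < #α → ∃ W, W ∉ U ∧ ∀ x ∈ s, x ≤ W

theorem chooseVal_spec (hext : Hext α) {P : Set (A α × α)} (hG : Good P) (hcard : #P < #α)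
    (b : A α) : chooseVal P b ∉ ran P ∧ ∀ p ∈ P, p.1 ≤ b → p.2 ≤ chooseVal P b := by
  have hs : (ran {p ∈ P | p.1 ≤ b}).Finite := by
    have h1 : {p ∈ P | p.1 ≤ b}.Finite := by
      have h2 : Set.InjOn Prod.fst {p ∈ P | p.1 ≤ b} := by
        intro p hp q hq he
        exact Prod.ext he (hG.pfun p hp.1 q hq.1 he)
      have h3 : (Prod.fst '' {p ∈ P | p.1 ≤ b}).Finite := by
        apply (Set.finite_Iic b).subset
        rintro x ⟨p, hp, rfl⟩; exact hp.2
      exact (Set.Finite.of_finite_image h3 h2)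
    exact h1.image _
  have hU : #(ran P) < #α := lt_of_le_of_lt (mk_image_le) hcard
  obtain ⟨W, hW1, hW2⟩ := hext _ hs (ran P) hU
  have hex : ∃ W : α, W ∉ ran P ∧ ∀ p ∈ P, p.1 ≤ b → p.2 ≤ W := by
    refine ⟨W, hW1, fun p hp hpb => hW2 _ ⟨p, ⟨hp, hpb⟩, rfl⟩⟩
  rw [chooseVal, dif_pos hex]
  exact hex.choose_spec

theorem addOne_subset (b : A α) (P : Set (A α × α)) : P ⊆ addOne b P := by
  rw [addOne]; split
  · exact le_rfl
  · exact Set.subset_insert _ _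

theorem addOne_diff_finite (b : A α) (P : Set (A α × α)) : (addOne b P \ P).Finite := by
  rw [addOne]; split
  · simp
  · exact (Set.finite_singleton _).subset (fun x hx => by
      rcases Set.mem_insert_iff.mp hx.1 with h | h
      · exact Set.mem_singleton_iff.mpr h
      · exact absurd h hx.2)

theorem addOne_mem (b : A α) (P : Set (A α × α)) : b ∈ dom (addOne b P) := by
  rw [addOne]; split
  · assumption
  · exact ⟨(b, chooseVal P b), Set.mem_insert _ _, rfl⟩

theorem addOne_good (hext : Hext α) {P : Set (A α × α)} (hG : Good P) (hcard : #P < #α)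
    {b : A α} (hdown : ∀ c : A α, c < b → c ∈ dom P) : Good (addOne b P) := by
  rw [addOne]; split
  · exact hG
  · rename_i hb
    obtain ⟨hfresh, habove⟩ := chooseVal_spec hext hG hcard b
    obtain ⟨h0, hinj, hmono, hdc⟩ := hG
    refine ⟨Set.mem_insert_of_mem _ h0, ?_, ?_, ?_⟩
    · rintro p (rfl | hp) q (rfl | hq) he
      · rfl
      · exact absurd ⟨q, hq, he.symm⟩ hfresh
      · exact absurd ⟨p, hp, he⟩ hfresh
      · exact hinj p hp q hq he
    · rintro p (rfl | hp) q (rfl | hq) he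
      · exact le_rfl
      · -- b ≤ q.1 with q ∈ P : then b ∈ dom P, contradiction
        exact absurd (hdc q hq b he) hb
      · exact habove p hp he
      · exact hmono p hp q hq he
    · rintro p (rfl | hp) c hc
      · rcases eq_or_lt_of_le hc with rfl | hlt
        · exact ⟨(c, chooseVal P c), Set.mem_insert _ _, rfl⟩
        · exact dom_mono (Set.subset_insert _ _) (hdown c hlt)
      · exact dom_mono (Set.subset_insert _ _) (hdc p hp c hc)

end Defs

end FCMAux
end

noncomputable section
namespace FCMAux
variable {α : Type*} [PartialOrder α] [OrderBot α] [Infinite α]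

omit [OrderBot α] [Infinite α] in
theorem iic_card_lt {b c : A α} (h : c < b) : (Finset.Iic c).card < (Finset.Iic b).card := by
  apply Finset.card_lt_card
  rw [Finset.ssubset_iff_of_subset (Finset.Iic_subset_Iic.mpr h.le)]
  exact ⟨b, Finset.mem_Iic.mpr le_rfl, fun hb => absurd (Finset.mem_Iic.mp hb) h.not_ge⟩

def assignDown (b : A α) (P : Set (A α × α)) : Set (A α × α) :=
  addOne b ((Finset.Iio b).attach.toList.foldl (fun Q c => assignDown c.1 Q) P)
termination_by (Finset.Iic b).card
decreasing_by exact iic_card_lt (Finset.mem_Iio.mp c.2)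

theorem assignDown_spec (hext : Hext α) :
    ∀ (n : ℕ) (b : A α), (Finset.Iic b).card ≤ n → ∀ P : Set (A α × α), Good P → #P < #α →
      P ⊆ assignDown b P ∧ (assignDown b P \ P).Finite ∧ Good (assignDown b P) ∧
      ∀ c : A α, c ≤ b → c ∈ dom (assignDown b P) := by
  intro n
  induction n with
  | zero =>
    intro b hb
    exfalso
    have : 0 < (Finset.Iic b).card := Finset.card_pos.mpr ⟨b, Finset.mem_Iic.mpr le_rfl⟩
    omega
  | succ n ih =>
    intro b hb P hG hcard
    -- fold lemma
    have key : ∀ l : List {x // x ∈ Finset.Iio b}, ∀ Q : Set (A α × α), Good Q → #Q < #α →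
        Q ⊆ l.foldl (fun Q c => assignDown c.1 Q) Q ∧
        ((l.foldl (fun Q c => assignDown c.1 Q) Q) \ Q).Finite ∧
        Good (l.foldl (fun Q c => assignDown c.1 Q) Q) ∧
        ∀ c ∈ l, ∀ d : A α, d ≤ c.1 → d ∈ dom (l.foldl (fun Q c => assignDown c.1 Q) Q) := by
      intro l
      induction l with
      | nil => intro Q hQ hc; exact ⟨le_rfl, by simp, hQ, by simp⟩
      | cons c l ihl =>
        intro Q hQ hc
        have hcb : c.1 < b := Finset.mem_Iio.mp c.2
        have hcard' : (Finset.Iic c.1).card ≤ n := by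
          have := iic_card_lt (α := α) hcb
          omega
        obtain ⟨h1, h2, h3, h4⟩ := ih c.1 hcard' Q hQ hc
        have hc2 : #(assignDown c.1 Q) < #α := card_lt_aux hc h1 h2
        obtain ⟨g1, g2, g3, g4⟩ := ihl (assignDown c.1 Q) h3 hc2
        simp only [List.foldl_cons]
        refine ⟨h1.trans g1, ?_, g3, ?_⟩
        · apply Set.Finite.subset (h2.union g2)
          intro x hx
          by_cases hxQ : x ∈ assignDown c.1 Q
          · exact Or.inl ⟨hxQ, hx.2⟩
          · exact Or.inr ⟨hx.1, hxQ⟩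
        · rintro e he d hd
          rcases List.mem_cons.mp he with rfl | he'
          · exact dom_mono g1 (h4 d hd)
          · exact g4 e he' d hd
    obtain ⟨k1, k2, k3, k4⟩ := key (Finset.Iio b).attach.toList P hG hcard
    set Q := (Finset.Iio b).attach.toList.foldl (fun Q c => assignDown c.1 Q) P with hQdef
    have hcardQ : #Q < #α := card_lt_aux hcard k1 k2
    have hdown : ∀ c : A α, c < b → c ∈ dom Q := by
      intro c hcb
      exact k4 ⟨c, Finset.mem_Iio.mpr hcb⟩ (by simp) c le_rfl
    have hAD : assignDown b P = addOne b Q := by rw [assignDown]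
    rw [hAD]
    refine ⟨k1.trans (addOne_subset _ _), ?_, addOne_good hext k3 hcardQ hdown, ?_⟩
    · apply Set.Finite.subset (k2.union (addOne_diff_finite b Q))
      intro x hx
      by_cases hxQ : x ∈ Q
      · exact Or.inl ⟨hxQ, hx.2⟩
      · exact Or.inr ⟨hx.1, hxQ⟩
    · intro c hc
      rcases eq_or_lt_of_le hc with rfl | hlt
      · exact addOne_mem _ _
      · exact dom_mono (addOne_subset _ _) (hdown c hlt)

end FCMAux
end

noncomputable section
namespace FCMAux
variable {α : Type*} [PartialOrder α] [OrderBot α] [Infinite α]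

theorem union_card_lt {X ι' : Type w} {c : Cardinal.{w}} (hc : ℵ₀ ≤ c) {S : Set ι'}
    (f : ι' → Set X) (hS : #S < c)
    (hf : ∀ i ∈ S, (f i).Finite) : #(⋃ i ∈ S, f i) < c := by
  rcases lt_or_ge (#S) ℵ₀ with h | h
  · have hSfin : S.Finite := by rwa [Cardinal.lt_aleph0_iff_set_finite] at h
    have : (⋃ i ∈ S, f i).Finite := hSfin.biUnion hf
    exact lt_of_lt_of_le this.lt_aleph0 hc
  · have hne : S.Nonempty := by
      rcases S.eq_empty_or_nonempty with rfl | h'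
      · exfalso; simp only [Cardinal.mk_emptyCollection] at h
        exact absurd (lt_of_lt_of_le aleph0_pos h) (lt_irrefl _)
      · exact h'
    haveI : Nonempty S := hne.to_subtype
    have h1 : #(⋃ i ∈ S, f i) ≤ #S * ℵ₀ := by
      rw [Set.biUnion_eq_iUnion]
      calc #(⋃ i : S, f i) ≤ #S * ⨆ i : S, #(f i) := Cardinal.mk_iUnion_le _
        _ ≤ #S * ℵ₀ := mul_le_mul' le_rfl (ciSup_le' fun i => ((hf i i.2).lt_aleph0).le)
    have h2 : #S * ℵ₀ = #S := by
      rw [Cardinal.mul_eq_max h (le_refl ℵ₀)]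
      exact max_eq_left h
    rw [h2] at h1
    exact lt_of_le_of_lt h1 hS

omit [OrderBot α] [Infinite α] in
theorem le_single {c : A α} {i : α} (h : c ≤ Finsupp.single i 1) :
    c = 0 ∨ c = Finsupp.single i 1 := by
  have hle : ∀ j, c j ≤ Finsupp.single i 1 j := fun j => Finsupp.le_def.mp h j
  by_cases hci : c i = 0
  · left
    ext j
    simp only [Finsupp.coe_zero, Pi.zero_apply]
    by_cases hj : j = i
    · subst hj; exact hci
    · have := hle j
      rw [Finsupp.single_eq_of_ne' (Ne.symm hj)] at this
      omega
  · right
    ext j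
    by_cases hj : j = i
    · subst hj
      have := hle j
      rw [Finsupp.single_eq_same] at this ⊢
      omega
    · have := hle j
      rw [Finsupp.single_eq_of_ne' (Ne.symm hj)] at this ⊢
      omega

def chooseAtom (P : Set (A α × α)) : α :=
  if h : ∃ i : α, Finsupp.single i 1 ∉ dom P ∧ ∀ p ∈ P, ¬ Finsupp.single i 1 ≤ p.1 then
    h.choose else Classical.arbitrary α

theorem chooseAtom_spec {P : Set (A α × α)} (hcard : #P < #α) :
    Finsupp.single (chooseAtom P) 1 ∉ dom P ∧
    ∀ p ∈ P, ¬ Finsupp.single (chooseAtom P) 1 ≤ p.1 := by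
  have hex : ∃ i : α, Finsupp.single i 1 ∉ dom P ∧ ∀ p ∈ P, ¬ Finsupp.single i 1 ≤ p.1 := by
    set Bad : Set α := ⋃ p ∈ (P : Set (A α × α)), {i : α | Finsupp.single i 1 ≤ p.1} with hBad
    have hBadlt : #Bad < #α := by
      apply union_card_lt (aleph0_le_mk α) _ hcard
      intro p hp
      apply (p.1.support.finite_toSet).subset
      intro i hi
      simp only [Set.mem_setOf_eq] at hi
      have : (1 : ℕ) ≤ p.1 i := by
        have := hi i
        rwa [Finsupp.single_eq_same] at this
      simp only [Finset.coe_sort_coe, Finset.mem_coe, Finsupp.mem_support_iff]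
      omega
    have : Bad ≠ Set.univ := by
      intro hcon
      rw [hcon, Cardinal.mk_univ] at hBadlt
      exact lt_irrefl _ hBadlt
    obtain ⟨i, hi⟩ : ∃ i, i ∉ Bad := by
      by_contra hcon
      push_neg at hcon
      exact this (Set.eq_univ_of_forall hcon)
    refine ⟨i, ?_, ?_⟩
    · intro hdom
      obtain ⟨p, hp, hp1⟩ := hdom
      exact hi (Set.mem_biUnion hp hp1.ge)
    · intro p hp hle
      exact hi (Set.mem_biUnion hp hle)
  rw [chooseAtom, dif_pos hex]
  exact hex.choose_spec

def surjStep (W : α) (P : Set (A α × α)) : Set (A α × α) :=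
  if W ∈ ran P then P else insert (Finsupp.single (chooseAtom P) 1, W) P

theorem surjStep_subset (W : α) (P : Set (A α × α)) : P ⊆ surjStep W P := by
  rw [surjStep]; split
  · exact le_rfl
  · exact Set.subset_insert _ _

theorem surjStep_diff_finite (W : α) (P : Set (A α × α)) : (surjStep W P \ P).Finite := by
  rw [surjStep]; split
  · simp
  · exact (Set.finite_singleton _).subset (fun x hx => by
      rcases Set.mem_insert_iff.mp hx.1 with h | h
      · exact Set.mem_singleton_iff.mpr h
      · exact absurd h hx.2)

theorem surjStep_mem (W : α) (P : Set (A α × α)) : W ∈ ran (surjStep W P) := by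
  rw [surjStep]; split
  · assumption
  · exact ⟨(Finsupp.single (chooseAtom P) 1, W), Set.mem_insert _ _, rfl⟩

theorem surjStep_good {P : Set (A α × α)} (hG : Good P) (hcard : #P < #α) (W : α) :
    Good (surjStep W P) := by
  rw [surjStep]; split
  · exact hG
  · rename_i hW
    obtain ⟨hdom, hnle⟩ := chooseAtom_spec hcard
    have hpf := hG.pfun
    obtain ⟨h0, hinj, hmono, hdc⟩ := hG
    set δ : A α := Finsupp.single (chooseAtom P) 1 with hδ
    refine ⟨Set.mem_insert_of_mem _ h0, ?_, ?_, ?_⟩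
    · rintro p (rfl | hp) q (rfl | hq) he
      · rfl
      · exact absurd ⟨q, hq, he.symm⟩ hW
      · exact absurd ⟨p, hp, he⟩ hW
      · exact hinj p hp q hq he
    · rintro p (rfl | hp) q (rfl | hq) he
      · exact le_rfl
      · exact absurd he (hnle q hq)
      · -- p ∈ P, p.1 ≤ δ
        rcases le_single he with hz | hz
        · have : p.2 = ⊥ := hpf p hp (0, ⊥) h0 hz
          rw [this]; exact bot_le
        · exact absurd (hz ▸ le_rfl) (hnle p hp)
      · exact hmono p hp q hq he
    · rintro p (rfl | hp) c hc
      · rcases le_single hc with rfl | rfl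
        · exact dom_mono (Set.subset_insert _ _) ⟨(0, ⊥), h0, rfl⟩
        · exact ⟨(δ, W), Set.mem_insert _ _, rfl⟩
      · exact dom_mono (Set.subset_insert _ _) (hdc p hp c hc)

end FCMAux
end

noncomputable section
namespace FCMAux
variable {α : Type*} [PartialOrder α] [OrderBot α] [Infinite α]

variable (r : A α → A α → Prop)

def step (τ : A α ≃ α) (j : A α) (P : Set (A α × α)) : Set (A α × α) :=
  assignDown j (surjStep (τ j) P)

def acc0 (τ : A α ≃ α) (hwf : WellFounded r) : A α → Set (A α × α) :=
  hwf.fix (fun j ih => step τ j (insert ((0 : A α), (⊥ : α)) (⋃ i : {i // r i j}, ih i.1 i.2)))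

theorem acc0_eq (τ : A α ≃ α) (hwf : WellFounded r) (j : A α) :
    acc0 r τ hwf j =
      step τ j (insert ((0 : A α), (⊥ : α)) (⋃ i : {i // r i j}, acc0 r τ hwf i.1)) := by
  rw [acc0, hwf.fix_eq]

/-- base partial assignment before step `j` -/
def base (τ : A α ≃ α) (hwf : WellFounded r) (j : A α) : Set (A α × α) :=
  insert ((0 : A α), (⊥ : α)) (⋃ i : {i // r i j}, acc0 r τ hwf i.1)

def newSet (τ : A α ≃ α) (hwf : WellFounded r) (j : A α) : Set (A α × α) :=
  acc0 r τ hwf j \ base r τ hwf j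

theorem outer_spec (hext : Hext α) [IsWellOrder (A α) r] (τ : A α ≃ α)
    (hwf : WellFounded r)
    (hseg : ∀ j : A α, #{i : A α | r i j} < #α) :
    ∀ j : A α,
      (acc0 r τ hwf j ⊆ {((0 : A α), (⊥ : α))} ∪
        ⋃ i ∈ {i : A α | r i j ∨ i = j}, newSet r τ hwf i) ∧
      (newSet r τ hwf j).Finite ∧
      (∀ i, r i j → acc0 r τ hwf i ⊆ acc0 r τ hwf j) ∧
      Good (acc0 r τ hwf j) ∧ #(acc0 r τ hwf j) < #α ∧
      (∀ c : A α, c ≤ j → c ∈ dom (acc0 r τ hwf j)) ∧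
      τ j ∈ ran (acc0 r τ hwf j) := by
  intro j
  induction j using hwf.induction with
  | _ j IH =>
  -- the base set
  set B := base r τ hwf j with hB
  have hBdef : B = insert ((0 : A α), (⊥ : α)) (⋃ i : {i // r i j}, acc0 r τ hwf i.1) := rfl
  -- membership characterization
  have hBelem : ∀ x ∈ B, x = ((0 : A α), (⊥ : α)) ∨ ∃ i, r i j ∧ x ∈ acc0 r τ hwf i := by
    intro x hx
    rcases Set.mem_insert_iff.mp hx with h | h
    · exact Or.inl h
    · obtain ⟨i, hi⟩ := Set.mem_iUnion.mp h
      exact Or.inr ⟨i.1, i.2, hi⟩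
  -- any element of B is in some acc0 i with r i j, provided such i exists; and chain property
  have hchain : ∀ i i', r i j → r i' j →
      acc0 r τ hwf i ⊆ acc0 r τ hwf i' ∨ acc0 r τ hwf i' ⊆ acc0 r τ hwf i := by
    intro i i' hi hi'
    rcases trichotomous_of r i i' with h | h | h
    · exact Or.inl ((IH i' hi').2.2.1 i h)
    · exact Or.inl (h ▸ le_rfl)
    · exact Or.inr ((IH i hi).2.2.1 i' h)
  have hzero : ∀ i, r i j → ((0 : A α), (⊥ : α)) ∈ acc0 r τ hwf i := fun i hi => ((IH i hi).2.2.2.1).1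
  -- common container
  have hcommon : ∀ x ∈ B, ∀ y ∈ B, ∃ Q : Set (A α × α), Good Q ∧ x ∈ Q ∧ y ∈ Q ∧ Q ⊆ B := by
    intro x hx y hy
    rcases hBelem x hx with rfl | ⟨i, hi, hxi⟩
    · rcases hBelem y hy with rfl | ⟨i', hi', hyi⟩
      · exact ⟨{((0 : A α), (⊥ : α))}, ⟨rfl, by rintro p rfl q rfl _; rfl,
          by rintro p rfl q rfl _; exact le_rfl, by
            rintro p rfl c hc
            have : c = 0 := le_antisymm hc zero_le
            exact ⟨((0:A α),(⊥:α)), rfl, this.symm⟩⟩,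
          rfl, rfl, by intro z hz; rw [hz]; exact Set.mem_insert _ _⟩
      · refine ⟨acc0 r τ hwf i', (IH i' hi').2.2.2.1, hzero i' hi', hyi, ?_⟩
        intro z hz; exact Set.mem_insert_of_mem _ (Set.mem_iUnion.mpr ⟨⟨i', hi'⟩, hz⟩)
    · rcases hBelem y hy with rfl | ⟨i', hi', hyi⟩
      · refine ⟨acc0 r τ hwf i, (IH i hi).2.2.2.1, hxi, hzero i hi, ?_⟩
        intro z hz; exact Set.mem_insert_of_mem _ (Set.mem_iUnion.mpr ⟨⟨i, hi⟩, hz⟩)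
      · rcases hchain i i' hi hi' with h | h
        · refine ⟨acc0 r τ hwf i', (IH i' hi').2.2.2.1, h hxi, hyi, ?_⟩
          intro z hz; exact Set.mem_insert_of_mem _ (Set.mem_iUnion.mpr ⟨⟨i', hi'⟩, hz⟩)
        · refine ⟨acc0 r τ hwf i, (IH i hi).2.2.2.1, hxi, h hyi, ?_⟩
          intro z hz; exact Set.mem_insert_of_mem _ (Set.mem_iUnion.mpr ⟨⟨i, hi⟩, hz⟩)
  have hGB : Good B := by
    refine ⟨Set.mem_insert _ _, ?_, ?_, ?_⟩
    · intro p hp q hq he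
      obtain ⟨Q, hQ, hpQ, hqQ, _⟩ := hcommon p hp q hq
      exact hQ.2.1 p hpQ q hqQ he
    · intro p hp q hq he
      obtain ⟨Q, hQ, hpQ, hqQ, _⟩ := hcommon p hp q hq
      exact hQ.2.2.1 p hpQ q hqQ he
    · intro p hp c hc
      obtain ⟨Q, hQ, hpQ, _, hQB⟩ := hcommon p hp p hp
      exact dom_mono hQB (hQ.2.2.2 p hpQ c hc)
  -- cardinality of B
  have hBsub : B ⊆ {((0 : A α), (⊥ : α))} ∪ ⋃ i ∈ {i : A α | r i j}, newSet r τ hwf i := by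
    intro x hx
    rcases hBelem x hx with rfl | ⟨i, hi, hxi⟩
    · exact Or.inl rfl
    · have := (IH i hi).1 hxi
      rcases this with h | h
      · exact Or.inl h
      · obtain ⟨s, hs⟩ := Set.mem_iUnion.mp h
        obtain ⟨hs', hx'⟩ := Set.mem_iUnion.mp hs
        right
        apply Set.mem_biUnion (show s ∈ {i : A α | r i j} from ?_) hx'
        rcases hs' with h' | rfl
        · exact _root_.trans h' hi
        · exact hi
  have hcardB : #B < #α := by
    have h1 : #(⋃ i ∈ {i : A α | r i j}, newSet r τ hwf i) < #α := by
      apply union_card_lt (aleph0_le_mk α) _ (hseg j)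
      intro i hi
      exact (IH i hi).2.1
    have h2 : #({((0 : A α), (⊥ : α))} ∪ ⋃ i ∈ {i : A α | r i j}, newSet r τ hwf i :
        Set (A α × α)) < #α := by
      apply card_lt_aux h1 Set.subset_union_right
      apply (Set.finite_singleton _).subset
      intro x hx
      rcases hx.1 with h | h
      · exact h
      · exact absurd h hx.2
    exact lt_of_le_of_lt (mk_le_mk_of_subset hBsub) h2
  -- now apply surjStep and assignDown
  set S1 := surjStep (τ j) B with hS1
  have hGS1 : Good S1 := surjStep_good hGB hcardB (τ j)
  have hcardS1 : #S1 < #α := card_lt_aux hcardB (surjStep_subset _ _) (surjStep_diff_finite _ _)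
  have hADspec := assignDown_spec hext (Finset.Iic j).card j le_rfl S1 hGS1 hcardS1
  have hacc : acc0 r τ hwf j = assignDown j S1 := acc0_eq r τ hwf j
  obtain ⟨had1, had2, had3, had4⟩ := hADspec
  have hBacc : B ⊆ acc0 r τ hwf j := by
    rw [hacc]; exact (surjStep_subset _ _).trans had1
  refine ⟨?_, ?_, ?_, ?_, ?_, ?_, ?_⟩
  · -- (a)
    intro x hx
    by_cases hxB : x ∈ B
    · rcases hBsub hxB with h | h
      · exact Or.inl h
      · obtain ⟨s, hs⟩ := Set.mem_iUnion.mp h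
        obtain ⟨hs', hx'⟩ := Set.mem_iUnion.mp hs
        exact Or.inr (Set.mem_biUnion (Or.inl hs') hx')
    · exact Or.inr (Set.mem_biUnion (show j ∈ {i : A α | r i j ∨ i = j} from Or.inr rfl)
        ⟨hx, hxB⟩)
  · -- (b) newSet finite
    have : newSet r τ hwf j ⊆ (assignDown j S1 \ S1) ∪ (S1 \ B) := by
      intro x hx
      obtain ⟨hx1, hx2⟩ := hx
      rw [hacc] at hx1
      by_cases hxS1 : x ∈ S1
      · exact Or.inr ⟨hxS1, hx2⟩
      · exact Or.inl ⟨hx1, hxS1⟩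
    exact (had2.union (surjStep_diff_finite _ _)).subset this
  · -- (c)
    intro i hi
    refine Set.Subset.trans ?_ hBacc
    intro z hz
    exact Set.mem_insert_of_mem _ (Set.mem_iUnion.mpr ⟨⟨i, hi⟩, hz⟩)
  · rw [hacc]; exact had3
  · rw [hacc]; exact card_lt_aux hcardS1 had1 had2
  · rw [hacc]; exact had4
  · have : τ j ∈ ran S1 := surjStep_mem _ _
    obtain ⟨p, hp, hp2⟩ := this
    exact ⟨p, by rw [hacc]; exact had1 hp, hp2⟩

end FCMAux
end

noncomputable section
namespace FCMAux
variable {α : Type*} [PartialOrder α] [OrderBot α] [Infinite α]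

theorem exists_mono_bijection (hext : Hext α) :
    ∃ f : (α →₀ ℕ) → α, Function.Bijective f ∧ Monotone f ∧ f 0 = ⊥ := by
  classical
  -- cardinality of A α
  have hAcard : #(A α) = #α := by
    rw [show (A α) = (α →₀ ℕ) from rfl, Cardinal.mk_finsupp_nat]
    exact max_eq_left (aleph0_le_mk α)
  obtain ⟨τ⟩ : Nonempty (A α ≃ α) := Cardinal.eq.mp hAcard
  obtain ⟨r, wo, hr⟩ := Cardinal.ord_eq (A α)
  haveI := wo
  have hwf : WellFounded r := wo.wf
  have hseg : ∀ j : A α, #{i : A α | r i j} < #α := by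
    intro j
    have h2 : #{i : A α // r i j} < #(A α) := card_typein_lt (r := r) j hr
    rw [hAcard] at h2
    exact h2
  have hspec := outer_spec r hext τ hwf hseg
  set Pinf : Set (A α × α) := ⋃ j : A α, acc0 r τ hwf j with hPinf
  -- directedness
  have hdir : ∀ x ∈ Pinf, ∀ y ∈ Pinf, ∃ j, x ∈ acc0 r τ hwf j ∧ y ∈ acc0 r τ hwf j := by
    intro x hx y hy
    obtain ⟨j1, hj1⟩ := Set.mem_iUnion.mp hx
    obtain ⟨j2, hj2⟩ := Set.mem_iUnion.mp hy
    rcases trichotomous_of r j1 j2 with h | h | h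
    · exact ⟨j2, (hspec j2).2.2.1 j1 h hj1, hj2⟩
    · exact ⟨j2, h ▸ hj1, hj2⟩
    · exact ⟨j1, hj1, (hspec j1).2.2.1 j2 h hj2⟩
  have hPinj : Pinj Pinf := by
    intro p hp q hq he
    obtain ⟨j, hpj, hqj⟩ := hdir p hp q hq
    exact ((hspec j).2.2.2.1).2.1 p hpj q hqj he
  have hPmono : Pmono Pinf := by
    intro p hp q hq he
    obtain ⟨j, hpj, hqj⟩ := hdir p hp q hq
    exact ((hspec j).2.2.2.1).2.2.1 p hpj q hqj he
  have hPfun : ∀ p ∈ Pinf, ∀ q ∈ Pinf, p.1 = q.1 → p.2 = q.2 := by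
    intro p hp q hq he
    exact le_antisymm (hPmono p hp q hq he.le) (hPmono q hq p hp he.ge)
  have h0mem : ((0 : A α), (⊥ : α)) ∈ Pinf := by
    obtain ⟨j⟩ : Nonempty (A α) := ⟨0⟩
    exact Set.mem_iUnion.mpr ⟨j, ((hspec j).2.2.2.1).1⟩
  have htot : ∀ a : A α, ∃ W : α, (a, W) ∈ Pinf := by
    intro a
    obtain ⟨p, hp, hp1⟩ := (hspec a).2.2.2.2.2.1 a le_rfl
    obtain ⟨p1, p2⟩ := p
    have hp1' : p1 = a := hp1
    subst hp1'
    exact ⟨p2, Set.mem_iUnion.mpr ⟨p1, hp⟩⟩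
  have hsurj : ∀ W : α, ∃ a : A α, (a, W) ∈ Pinf := by
    intro W
    obtain ⟨p, hp, hp2⟩ := (hspec (τ.symm W)).2.2.2.2.2.2
    rw [τ.apply_symm_apply] at hp2
    obtain ⟨p1, p2⟩ := p
    have hp2' : p2 = W := hp2
    subst hp2'
    exact ⟨p1, Set.mem_iUnion.mpr ⟨τ.symm p2, hp⟩⟩
  -- define f
  choose f hf using htot
  refine ⟨f, ⟨?_, ?_⟩, ?_, ?_⟩
  · intro a b hab
    exact hPinj (a, f a) (hf a) (b, f b) (hf b) hab
  · intro W
    obtain ⟨a, ha⟩ := hsurj W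
    refine ⟨a, ?_⟩
    exact hPfun (a, f a) (hf a) (a, W) ha rfl
  · intro a b hab
    exact hPmono (a, f a) (hf a) (b, f b) (hf b) hab
  · exact hPfun (0, f 0) (hf 0) (0, ⊥) h0mem rfl

end FCMAux
end

universe u v

section Concrete
variable (K : Type u) (V : Type v) [Field K] [AddCommGroup V] [Module K V]
  (hV : ¬ FiniteDimensional K V)

local notation "T" => {W : Submodule K V // FiniteDimensional K W}

include hV in
theorem infiniteT : Infinite T := by
  have hinf : Infinite (Module.Free.ChooseBasisIndex K V) := by
    rw [← not_finite_iff_infinite]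
    intro hfin
    exact hV (Module.Finite.of_basis (Module.Free.chooseBasis K V))
  set b := Module.Free.chooseBasis K V with hb
  refine Infinite.of_injective
    (fun i : Module.Free.ChooseBasisIndex K V =>
      (⟨Submodule.span K {b i}, FiniteDimensional.span_of_finite K (Set.finite_singleton _)⟩ : T))
    ?_
  intro i j hij
  simp only [Subtype.mk.injEq] at hij
  have hmem : b i ∈ Submodule.span K {b j} := by
    rw [← hij]; exact Submodule.mem_span_singleton_self _
  obtain ⟨c, hc⟩ := Submodule.mem_span_singleton.mp hmem
  by_contra hne
  have := congrArg (fun x => b.repr x i) hc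
  simp only [map_smul, Finsupp.smul_apply, Module.Basis.repr_self] at this
  rw [Finsupp.single_eq_of_ne' (show j ≠ i from fun h => hne h.symm),
    Finsupp.single_eq_same] at this
  simp at this

include hV in
theorem hextT : ∀ s : Set T, s.Finite → ∀ U : Set T, #U < #T → ∃ W, W ∉ U ∧ ∀ x ∈ s, x ≤ W := by
  intro s hs U hU
  -- upper bound for s
  obtain ⟨S, hS⟩ : ∃ S : T, ∀ x ∈ s, x.1 ≤ S.1 := by
    haveI : ∀ i : T, FiniteDimensional K i.1 := fun i => i.2
    refine ⟨⟨hs.toFinset.sup (fun x => x.1), inferInstance⟩, ?_⟩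
    intro x hx
    exact Finset.le_sup (hs.mem_toFinset.mpr hx)
  -- injection from T into the upset of S
  set p : Submodule K V := S.1 with hp
  haveI : FiniteDimensional K p := S.2
  obtain ⟨q, hq⟩ := Submodule.exists_isCompl p
  have hrankV : ℵ₀ ≤ Module.rank K V := by
    by_contra h
    push_neg at h
    exact hV (by rw [FiniteDimensional]; exact Module.rank_lt_aleph0_iff.mp h)
  have hrankeq : Module.rank K V = Module.rank K q := by
    have h1 : Module.rank K (p × q) = Module.rank K V :=
      (Submodule.prodEquivOfIsCompl p q hq).rank_eq
    rw [rank_prod'] at h1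
    have hp_lt : Module.rank K p < ℵ₀ := Module.rank_lt_aleph0 K p
    have hq_inf : ℵ₀ ≤ Module.rank K q := by
      by_contra h
      push_neg at h
      have := Cardinal.add_lt_aleph0 hp_lt h
      rw [h1] at this
      exact absurd this (not_lt.mpr hrankV)
    rw [← h1, Cardinal.add_eq_right hq_inf (le_trans hp_lt.le hq_inf)]
  obtain ⟨g⟩ := nonempty_linearEquiv_of_rank_eq hrankeq
  set φ : V →ₗ[K] V := q.subtype ∘ₗ g.toLinearMap with hφ
  have hφinj : Function.Injective φ := by
    rw [hφ, LinearMap.coe_comp]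
    exact Subtype.val_injective.comp g.injective
  have hφrange : ∀ W : Submodule K V, Submodule.map φ W ≤ q := by
    intro W
    rintro x ⟨y, hy, rfl⟩
    exact (g y).2
  set ψ : T → {W : T // S ≤ W} := fun W =>
    ⟨⟨p ⊔ Submodule.map φ W.1, by
        haveI := W.2
        haveI : FiniteDimensional K (Submodule.map φ W.1) := Module.Finite.map W.1 φ
        infer_instance⟩,
      Subtype.coe_le_coe.mp le_sup_left⟩ with hψ
  have hψinj : Function.Injective ψ := by
    intro W W' h
    simp only [hψ, Subtype.mk.injEq] at h
    have key : ∀ X : Submodule K V, X ≤ q → (p ⊔ X) ⊓ q = X := by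
      intro X hX
      rw [sup_comm, sup_inf_assoc_of_le p (show X ≤ q from hX),
        hq.disjoint.eq_bot, sup_bot_eq]
    have h2 : Submodule.map φ W.1 = Submodule.map φ W'.1 := by
      rw [← key _ (hφrange W.1), ← key _ (hφrange W'.1), h]
    exact Subtype.ext (Submodule.map_injective_of_injective hφinj h2)
  have hTle : #T ≤ #{W : T // S ≤ W} := Cardinal.mk_le_of_injective hψinj
  by_contra hcon
  push_neg at hcon
  have hsubset : {W : T | S ≤ W} ⊆ U := by
    intro W hW
    by_contra hWU
    obtain ⟨x, hx1, hx2⟩ := hcon W hWU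
    exact hx2 (le_trans (show x ≤ S from hS x hx1) hW)
  have h1 : #{W : T // S ≤ W} ≤ #U := mk_le_mk_of_subset hsubset
  exact absurd (hTle.trans h1) (not_le.mpr hU)

end Concrete


theorem free_commutative_monoid_structure_on_finite_dim_subspaces
    (K : Type u) (V : Type v) [Field K] [AddCommGroup V] [Module K V]
    (hV : ¬ FiniteDimensional K V) :
    ∃ (star : {W : Submodule K V // FiniteDimensional K W} →
              {W : Submodule K V // FiniteDimensional K W} →
              {W : Submodule K V // FiniteDimensional K W})
      (zero : {W : Submodule K V // FiniteDimensional K W}),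
      (∀ a b, star a b = star b a) ∧
      (∀ a b c, star (star a b) c = star a (star b c)) ∧
      (∀ a, star zero a = a) ∧
      (∃ (ι : Type v) (e : {W : Submodule K V // FiniteDimensional K W} ≃ (ι →₀ ℕ)),
        e zero = 0 ∧ ∀ a b, e (star a b) = e a + e b) ∧
      (∀ F G : {W : Submodule K V // FiniteDimensional K W},
        (F : Submodule K V) ≤ (star F G : Submodule K V) ∧
        (G : Submodule K V) ≤ (star F G : Submodule K V)) := by
  classical
  haveI : Infinite {W : Submodule K V // FiniteDimensional K W} := infiniteT K V hV
  letI : OrderBot {W : Submodule K V // FiniteDimensional K W} :=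
    { bot := ⟨⊥, inferInstance⟩, bot_le := fun W => Subtype.coe_le_coe.mp bot_le }
  obtain ⟨f, hbij, hmono, hf0⟩ :=
    FCMAux.exists_mono_bijection (α := {W : Submodule K V // FiniteDimensional K W})
      (hextT K V hV)
  set E := Equiv.ofBijective f hbij with hE
  set e := E.symm with he'
  have he : ∀ x, e (f x) = x := fun x => E.symm_apply_apply x
  have hfe : ∀ a, f (e a) = a := fun a => E.apply_symm_apply a
  refine ⟨fun F G => f (e F + e G), f 0, ?_, ?_, ?_,
    ⟨{W : Submodule K V // FiniteDimensional K W}, e, he 0, fun a b => he _⟩, ?_⟩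
  · intro a b
    show f (e a + e b) = f (e b + e a)
    rw [add_comm]
  · intro a b c
    show f (e (f (e a + e b)) + e c) = f (e a + e (f (e b + e c)))
    rw [he, he, add_assoc]
  · intro a
    show f (e (f 0) + e a) = a
    rw [he, zero_add, hfe]
  · intro F G
    constructor
    · have h1 : F ≤ f (e F + e G) := by
        have := hmono (self_le_add_right (e F) (e G))
        rwa [hfe] at this
      exact Subtype.coe_le_coe.mpr h1
    · have h1 : G ≤ f (e F + e G) := by
        have := hmono (self_le_add_left (e G) (e F))
        rwa [hfe] at this
      exact Subtype.coe_le_coe.mpr h1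
end

section
/- Let V be a finite-dimensional vector space of dimension at least 2 over a field with at least 3 elements. Then there is no binary operation ∗ on the set of all subspaces of V making it a cancellative commutative monoid such that F, G ⊆ F ∗ G for all subspaces F, G. (Indeed, taking three distinct hyperplanes W₁, W₂, W₃ in V, any such operation would force W₁ ∗ W₃ = V = W₂ ∗ W₃, contradicting cancellativity.) -/
theorem no_cancellative_monoid_on_subspaces_of_finite_dim
    (K V : Type*) [Field K] [AddCommGroup V] [Module K V] [FiniteDimensional K V]
    (hdim : 2 ≤ Module.finrank K V)
    (hK : ∃ a b c : K, a ≠ b ∧ a ≠ c ∧ b ≠ c) :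
    ¬ ∃ star : Submodule K V → Submodule K V → Submodule K V,
        (∀ a b, star a b = star b a) ∧
        (∀ a b c, star (star a b) c = star a (star b c)) ∧
        (∃ e, ∀ a, star e a = a) ∧
        (∀ a b c, star a c = star b c → a = b) ∧
        (∀ F G : Submodule K V, F ≤ star F G ∧ G ≤ star F G) := by
  rintro ⟨star, comm, assoc, ⟨e, he⟩, cancel, hle⟩
  set b := Module.finBasis K V with hb
  have h0 : (0 : ℕ) < Module.finrank K V := by omega
  have h1 : (1 : ℕ) < Module.finrank K V := hdim
  set i0 : Fin (Module.finrank K V) := ⟨0, h0⟩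
  set i1 : Fin (Module.finrank K V) := ⟨1, h1⟩
  have hne : i0 ≠ i1 := by simp [i0, i1, Fin.ext_iff]
  set φ1 : V →ₗ[K] K := b.coord i0
  set φ2 : V →ₗ[K] K := b.coord i1
  have c00 : φ1 (b i0) = 1 := by simp [φ1]
  have c01 : φ1 (b i1) = 0 := by simp [φ1, Module.Basis.coord_apply, Finsupp.single_eq_of_ne' hne.symm]
  have c10 : φ2 (b i0) = 0 := by simp [φ2, Module.Basis.coord_apply, Finsupp.single_eq_of_ne' hne]
  have c11 : φ2 (b i1) = 1 := by simp [φ2]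
  set W1 : Submodule K V := LinearMap.ker φ1
  set W2 : Submodule K V := LinearMap.ker φ2
  set W3 : Submodule K V := LinearMap.ker (φ1 + φ2)
  -- W1 ≠ W2
  have hW12 : W1 ≠ W2 := by
    intro h
    have : b i1 ∈ W2 := h ▸ (by simp [W1, LinearMap.mem_ker, c01])
    simp [W2, LinearMap.mem_ker, c11] at this
  -- sup lemmas
  have sup13 : W1 ⊔ W3 = ⊤ := by
    rw [eq_top_iff]
    intro v _
    rw [Submodule.mem_sup]
    refine ⟨v + φ1 v • (b i1 - b i0), ?_, -(φ1 v) • (b i1 - b i0), ?_, by module⟩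
    · simp [W1, LinearMap.mem_ker, map_sub, c00, c01]
    · simp [W3, LinearMap.mem_ker, map_sub, c00, c01, c10, c11]
  have sup23 : W2 ⊔ W3 = ⊤ := by
    rw [eq_top_iff]
    intro v _
    rw [Submodule.mem_sup]
    refine ⟨v + φ2 v • (b i0 - b i1), ?_, -(φ2 v) • (b i0 - b i1), ?_, by module⟩
    · simp [W2, LinearMap.mem_ker, map_sub, c10, c11]
    · simp [W3, LinearMap.mem_ker, map_sub, c00, c01, c10, c11]
  have t13 : star W1 W3 = ⊤ :=
    le_antisymm le_top (by rw [← sup13]; exact sup_le (hle W1 W3).1 (hle W1 W3).2)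
  have t23 : star W2 W3 = ⊤ :=
    le_antisymm le_top (by rw [← sup23]; exact sup_le (hle W2 W3).1 (hle W2 W3).2)
  exact hW12 (cancel W1 W2 W3 (t13.trans t23.symm))
end

section
/- Let X be a Banach space which is complemented in its bidual X** by a bounded projection P of norm at most λ, and let S be an amenable semigroup with scalar invariant mean m : ℓ∞(S) → ℝ of norm 1. Then the map M : ℓ∞(S,X) → X defined by M = κ_X⁻¹ ∘ P ∘ M̃, where ⟨M̃ f, φ⟩ = ⟨m, t ↦ ⟨φ, f(t)⟩⟩ for φ ∈ X*, is an X-valued invariant λ-mean on S. -/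
open scoped ENNReal

noncomputable section

def dualComp {S X : Type*} [NormedAddCommGroup X] [NormedSpace ℝ X]
    (φ : X →L[ℝ] ℝ) (f : Linf S X) : Linf S ℝ :=
  ⟨fun t => φ (f t), memℓp_infty ⟨‖φ‖ * ‖f‖, by
    rintro - ⟨t, rfl⟩
    calc ‖φ (f t)‖ ≤ ‖φ‖ * ‖f t‖ := φ.le_opNorm _
    _ ≤ ‖φ‖ * ‖f‖ := by
        gcongr
        exact lp.norm_apply_le_norm (by simp) f t⟩⟩


section Aux

variable {S X : Type*} [NormedAddCommGroup X] [NormedSpace ℝ X]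

lemma dualComp_apply (φ : X →L[ℝ] ℝ) (f : Linf S X) (t : S) : dualComp φ f t = φ (f t) := rfl

lemma dualComp_norm_le (φ : X →L[ℝ] ℝ) (f : Linf S X) : ‖dualComp φ f‖ ≤ ‖φ‖ * ‖f‖ := by
  refine lp.norm_le_of_forall_le (mul_nonneg (norm_nonneg _) (norm_nonneg _)) fun t => ?_
  calc ‖(dualComp φ f) t‖ = ‖φ (f t)‖ := rfl
  _ ≤ ‖φ‖ * ‖f t‖ := φ.le_opNorm _
  _ ≤ ‖φ‖ * ‖f‖ := by gcongr; exact lp.norm_apply_le_norm (by simp) f t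

lemma dualComp_add_left (φ ψ : X →L[ℝ] ℝ) (f : Linf S X) :
    dualComp (φ + ψ) f = dualComp φ f + dualComp ψ f := by
  ext t; simp [dualComp_apply]

lemma dualComp_smul_left (c : ℝ) (φ : X →L[ℝ] ℝ) (f : Linf S X) :
    dualComp (c • φ) f = c • dualComp φ f := by
  ext t; simp [dualComp_apply]

lemma dualComp_add_right (φ : X →L[ℝ] ℝ) (f g : Linf S X) :
    dualComp φ (f + g) = dualComp φ f + dualComp φ g := by
  ext t; simp [dualComp_apply]

lemma dualComp_smul_right (c : ℝ) (φ : X →L[ℝ] ℝ) (f : Linf S X) :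
    dualComp φ (c • f) = c • dualComp φ f := by
  ext t; simp [dualComp_apply]

/-- The functional `φ ↦ m (dualComp φ f)` as an element of `X**`. -/
def MtFun (m : Linf S ℝ →L[ℝ] ℝ) (f : Linf S X) : StrongDual ℝ (StrongDual ℝ X) :=
  LinearMap.mkContinuous
    { toFun := fun φ => m (dualComp φ f)
      map_add' := fun φ ψ => by
        show m (dualComp (φ + ψ) f) = m (dualComp φ f) + m (dualComp ψ f)
        rw [dualComp_add_left, map_add]
      map_smul' := fun c φ => by
        show m (dualComp (c • φ) f) = c • m (dualComp φ f)
        rw [dualComp_smul_left, map_smul] }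
    (‖m‖ * ‖f‖) (fun φ => by
      calc ‖m (dualComp φ f)‖ ≤ ‖m‖ * ‖dualComp φ f‖ := m.le_opNorm _
      _ ≤ ‖m‖ * (‖φ‖ * ‖f‖) := by gcongr; exact dualComp_norm_le φ f
      _ = ‖m‖ * ‖f‖ * ‖φ‖ := by ring)

lemma MtFun_apply (m : Linf S ℝ →L[ℝ] ℝ) (f : Linf S X) (φ : X →L[ℝ] ℝ) :
    MtFun m f φ = m (dualComp φ f) := rfl

lemma MtFun_norm_le (m : Linf S ℝ →L[ℝ] ℝ) (f : Linf S X) :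
    ‖MtFun m f‖ ≤ ‖m‖ * ‖f‖ :=
  LinearMap.mkContinuous_norm_le _ (mul_nonneg (norm_nonneg m) (norm_nonneg f)) _

lemma MtFun_add (m : Linf S ℝ →L[ℝ] ℝ) (f g : Linf S X) :
    MtFun m (f + g) = MtFun m f + MtFun m g := by
  ext φ
  simp only [MtFun_apply, ContinuousLinearMap.add_apply]
  rw [dualComp_add_right, map_add]

lemma MtFun_smul (m : Linf S ℝ →L[ℝ] ℝ) (c : ℝ) (f : Linf S X) :
    MtFun m (c • f) = c • MtFun m f := by
  ext φ
  simp only [MtFun_apply, ContinuousLinearMap.coe_smul', Pi.smul_apply]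
  rw [dualComp_smul_right, map_smul]

end Aux

theorem complemented_in_bidual_gives_invariant_mean
    {S X : Type*} [AddSemigroup S] [NormedAddCommGroup X] [NormedSpace ℝ X]
    [CompleteSpace X] (lam : ℝ)
    (P : StrongDual ℝ (StrongDual ℝ X) →L[ℝ]
         StrongDual ℝ (StrongDual ℝ X))
    (hPfix : ∀ x : X, P (NormedSpace.inclusionInDoubleDual ℝ X x) =
      NormedSpace.inclusionInDoubleDual ℝ X x)
    (hPrange : ∀ y, ∃ x : X, P y = NormedSpace.inclusionInDoubleDual ℝ X x)
    (hPnorm : @Norm.norm _ (ContinuousLinearMap.hasOpNorm (σ₁₂ := RingHom.id ℝ)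
      (E := StrongDual ℝ (StrongDual ℝ X)) (F := StrongDual ℝ (StrongDual ℝ X))) P ≤ lam)
    (m : Linf S ℝ →L[ℝ] ℝ) (hm : IsInvMean 1 m) :
    ∃ M : Linf S X →L[ℝ] X, IsInvMean lam M ∧
      ∀ (f : Linf S X) (y : StrongDual ℝ (StrongDual ℝ X)),
        (∀ φ : StrongDual ℝ X, y φ = m (dualComp φ f)) →
        NormedSpace.inclusionInDoubleDual ℝ X (M f) = P y := by
  classical
  obtain ⟨hm1, hmc, hminv⟩ := hm
  set κ := NormedSpace.inclusionInDoubleDual ℝ X with hκ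
  have hκinj : Function.Injective κ := (NormedSpace.inclusionInDoubleDualLi ℝ (E := X)).injective
  have hκnorm : ∀ x : X, ‖κ x‖ = ‖x‖ := fun x =>
    (NormedSpace.inclusionInDoubleDualLi ℝ (E := X)).norm_map x
  have hlam : 0 ≤ lam := le_trans (ContinuousLinearMap.opNorm_nonneg _) hPnorm
  -- the underlying function
  set Mf : Linf S X → X := fun f => Classical.choose (hPrange (MtFun m f)) with hMf
  have hMfspec : ∀ f : Linf S X, κ (Mf f) = P (MtFun m f) := fun f =>
    (Classical.choose_spec (hPrange (MtFun m f))).symm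
  have hadd : ∀ f g : Linf S X, Mf (f + g) = Mf f + Mf g := by
    intro f g
    apply hκinj
    rw [map_add, hMfspec, hMfspec, hMfspec, MtFun_add, map_add]
  have hsmul : ∀ (c : ℝ) (f : Linf S X), Mf (c • f) = c • Mf f := by
    intro c f
    apply hκinj
    rw [map_smul, hMfspec, hMfspec, MtFun_smul, map_smul]
  have hbound : ∀ f : Linf S X, ‖Mf f‖ ≤ lam * ‖f‖ := by
    intro f
    rw [← hκnorm, hMfspec]
    calc ‖P (MtFun m f)‖ ≤ lam * ‖MtFun m f‖ := by
          have key := ContinuousLinearMap.le_of_opNorm_le _ hPnorm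
          have key2 : ∀ y, ‖P y‖ ≤ lam * ‖y‖ := key
          exact key2 _
    _ ≤ lam * (‖m‖ * ‖f‖) := by
        gcongr
        exact MtFun_norm_le m f
    _ ≤ lam * (1 * ‖f‖) := by gcongr
    _ = lam * ‖f‖ := by ring
  set M : Linf S X →L[ℝ] X :=
    LinearMap.mkContinuous { toFun := Mf, map_add' := hadd, map_smul' := hsmul } lam hbound
    with hMdef
  have hMapp : ∀ f, M f = Mf f := fun f => rfl
  have hMspec : ∀ f : Linf S X, κ (M f) = P (MtFun m f) := fun f => hMfspec f
  refine ⟨M, ⟨LinearMap.mkContinuous_norm_le _ hlam _, ?_, ?_⟩, ?_⟩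
  · -- constants
    intro x
    apply hκinj
    rw [hMspec]
    have : MtFun m (linfConst S x) = κ x := by
      ext φ
      rw [MtFun_apply]
      have h1 : dualComp φ (linfConst S x) = linfConst S (φ x) := by
        ext t; rfl
      rw [h1, hmc (φ x)]
      rfl
    rw [this, hPfix]
  · -- invariance
    intro s f
    constructor
    · apply hκinj
      rw [hMspec, hMspec]
      congr 1
      ext φ
      rw [MtFun_apply, MtFun_apply]
      have h1 : dualComp φ (lTrans s f) = lTrans s (dualComp φ f) := by ext t; rfl
      rw [h1, (hminv s (dualComp φ f)).1]
    · apply hκinj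
      rw [hMspec, hMspec]
      congr 1
      ext φ
      rw [MtFun_apply, MtFun_apply]
      have h1 : dualComp φ (rTrans s f) = rTrans s (dualComp φ f) := by ext t; rfl
      rw [h1, (hminv s (dualComp φ f)).2]
  · -- formula
    intro f y hy
    have : y = MtFun m f := by
      ext φ
      rw [hy φ, MtFun_apply]
    rw [this, ← hMspec]


end
end

section
/- Let G be a group, X a Banach space, and M : ℓ∞(G,X) → X a bounded linear operator that is invariant under translations, i.e., M(f·s) = M(f) for all s ∈ G. If f₁, ..., fₙ ∈ ℓ∞(G,X) are translates of a single function f (fᵢ = f·gᵢ for some gᵢ ∈ G) and the fᵢ have pairwise disjoint supports, then ‖n·M(f)‖ = ‖M(f₁ + ⋯ + fₙ)‖ ≤ ‖M‖·‖f‖. Consequently, if f admits infinitely many pairwise-disjointly-supported translates f·g, f·g², f·g³, ..., then M(f) = 0. -/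
open scoped ENNReal

noncomputable section

theorem disjoint_translates_force_mean_zero
    {G X : Type*} [AddGroup G] [NormedAddCommGroup X] [NormedSpace ℝ X] [CompleteSpace X]
    (M : Linf G X →L[ℝ] X)
    (hM : ∀ (s : G) (f : Linf G X), M (rTrans s f) = M f) :
    (∀ (n : ℕ) (f : Linf G X) (g : Fin n → G),
        (Pairwise fun i j : Fin n => ∀ t : G, f (t + g i) = 0 ∨ f (t + g j) = 0) →
        ‖(n : ℝ) • M f‖ = ‖M (∑ i : Fin n, rTrans (g i) f)‖ ∧
        ‖(n : ℝ) • M f‖ ≤ ‖M‖ * ‖f‖) ∧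
    (∀ (f : Linf G X) (g : G),
        (Pairwise fun i j : ℕ => ∀ t : G, f (t + (i + 1) • g) = 0 ∨ f (t + (j + 1) • g) = 0) →
        M f = 0) := by
  have key : ∀ (n : ℕ) (f : Linf G X) (g : Fin n → G),
      (Pairwise fun i j : Fin n => ∀ t : G, f (t + g i) = 0 ∨ f (t + g j) = 0) →
      ‖(n : ℝ) • M f‖ = ‖M (∑ i : Fin n, rTrans (g i) f)‖ ∧
      ‖(n : ℝ) • M f‖ ≤ ‖M‖ * ‖f‖ := by
    intro n f g hdisj
    have hsum : M (∑ i : Fin n, rTrans (g i) f) = (n : ℝ) • M f := by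
      rw [map_sum]
      simp only [hM]
      rw [Finset.sum_const, Finset.card_fin, Nat.cast_smul_eq_nsmul]
    have hnormsum : ‖(∑ i : Fin n, rTrans (g i) f : Linf G X)‖ ≤ ‖f‖ := by
      refine lp.norm_le_of_forall_le (norm_nonneg f) fun t => ?_
      have hcoe : (∑ i : Fin n, rTrans (g i) f : Linf G X) t
          = ∑ i : Fin n, f (t + g i) := by
        rw [lp.coeFn_sum, Finset.sum_apply]
        rfl
      rw [hcoe]
      by_cases hex : ∃ i : Fin n, f (t + g i) ≠ 0
      · obtain ⟨i₀, hi₀⟩ := hex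
        have : ∑ i : Fin n, f (t + g i) = f (t + g i₀) := by
          refine Finset.sum_eq_single i₀ (fun j _ hj => ?_) (by simp)
          rcases hdisj hj t with h | h
          · exact h
          · exact absurd h hi₀
        rw [this]
        exact lp.norm_apply_le_norm (by simp) f (t + g i₀)
      · push_neg at hex
        simp [hex]
    constructor
    · rw [hsum]
    · rw [← hsum]
      calc ‖M (∑ i : Fin n, rTrans (g i) f)‖
          ≤ ‖M‖ * ‖(∑ i : Fin n, rTrans (g i) f : Linf G X)‖ := M.le_opNorm _
        _ ≤ ‖M‖ * ‖f‖ := by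
            exact mul_le_mul_of_nonneg_left hnormsum (norm_nonneg M)
  refine ⟨key, fun f g hdisj => ?_⟩
  have hbound : ∀ n : ℕ, (n : ℝ) * ‖M f‖ ≤ ‖M‖ * ‖f‖ := by
    intro n
    have := (key n f (fun i : Fin n => ((i : ℕ) + 1) • g)
      (fun i j hij => hdisj (fun h => hij (Fin.ext (by omega))))).2
    rwa [norm_smul, Real.norm_natCast] at this
  by_contra h
  have hpos : 0 < ‖M f‖ := norm_pos_iff.mpr h
  obtain ⟨n, hn⟩ := exists_nat_gt ((‖M‖ * ‖f‖) / ‖M f‖)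
  have := hbound n
  have : ‖M‖ * ‖f‖ < (n : ℝ) * ‖M f‖ := (div_lt_iff₀ hpos).mp hn
  linarith

end
end
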